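/- arXiv:2403.02048 — 4 statements merged into one kernel-verified Lean document; each statement's English description precedes it below -/
import Mathlib

section
/- Let p, q > 1 with β = max{p,q}, let (u,v) ∈ ℝ² with (u,v) ≠ (0,0), and let F : ℝ² → ℝ be twice continuously differentiable satisfying: F_{ts}(t,s)·t·s ≥ 0 and 0 < (β-1)(F_t(t,s)·t + F_s(t,s)·s) < F_{tt}(t,s)·t² + F_{ss}(t,s)·s² for all (t,s) ≠ (0,0). Then the function A(τ) = (1/p)·F_t(τu, τv)·τu + (1/p)·F_s(τu, τv)·τv − F(τu, τv) is strictly increasing on (0, +∞). -/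
theorem stmt_6 (p q : ℝ) (hp : 1 < p) (hq : 1 < q) (hqp : q ≤ p)
    (u v : ℝ) (huv : (u, v) ≠ (0, 0)) (F : ℝ → ℝ → ℝ)
    (hF : ContDiff ℝ 2 (Function.uncurry F))
    (hFts : ∀ t s : ℝ,
      deriv (fun s' => deriv (fun t' => F t' s') t) s * t * s ≥ 0)
    (hF4 : ∀ t s : ℝ, (t, s) ≠ (0, 0) →
      0 < (max p q - 1) *
          (deriv (fun t' => F t' s) t * t + deriv (fun s' => F t s') s * s) ∧
        (max p q - 1) *
            (deriv (fun t' => F t' s) t * t + deriv (fun s' => F t s') s * s) <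
          deriv (fun t' => deriv (fun t'' => F t'' s) t') t * t ^ 2 +
            deriv (fun s' => deriv (fun s'' => F t s'') s') s * s ^ 2) :
    StrictMonoOn (fun τ =>
      1 / p * deriv (fun t' => F t' (τ * v)) (τ * u) * (τ * u) +
        1 / p * deriv (fun s' => F (τ * u) s') (τ * v) * (τ * v) -
          F (τ * u) (τ * v)) (Set.Ioi (0 : ℝ)) := by
  have hp0 : (0:ℝ) < p := lt_trans one_pos hp
  set f : ℝ × ℝ → ℝ := Function.uncurry F with hfdef
  have hfd : Differentiable ℝ f := hF.differentiable (by norm_num)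
  have hf1 : ContDiff ℝ 1 (fderiv ℝ f) := hF.fderiv_right (m := 1) (by norm_num)
  have hfd1 : Differentiable ℝ (fderiv ℝ f) := hf1.differentiable (by norm_num)
  -- first partial derivatives along curves
  have keyf : ∀ (c : ℝ → ℝ × ℝ) (c' : ℝ × ℝ) (τ : ℝ), HasDerivAt c c' τ →
      HasDerivAt (fun τ' => f (c τ')) (fderiv ℝ f (c τ) c') τ := by
    intro c c' τ hc
    exact (hfd (c τ)).hasFDerivAt.comp_hasDerivAt τ hc
  have keyD : ∀ (w : ℝ × ℝ) (c : ℝ → ℝ × ℝ) (c' : ℝ × ℝ) (τ : ℝ), HasDerivAt c c' τ →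
      HasDerivAt (fun τ' => fderiv ℝ f (c τ') w)
        (fderiv ℝ (fderiv ℝ f) (c τ) c' w) τ := by
    intro w c c' τ hc
    have h1 : HasFDerivAt (fun x => fderiv ℝ f x w)
        ((ContinuousLinearMap.apply ℝ ℝ w).comp (fderiv ℝ (fderiv ℝ f) (c τ))) (c τ) :=
      (ContinuousLinearMap.apply ℝ ℝ w).hasFDerivAt.comp _ (hfd1 (c τ)).hasFDerivAt
    exact h1.comp_hasDerivAt τ hc
  have hc1 : ∀ s t : ℝ, HasDerivAt (fun t' : ℝ => (t', s)) ((1:ℝ), (0:ℝ)) t := by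
    intro s t
    exact HasDerivAt.prodMk (hasDerivAt_id t) (hasDerivAt_const t s)
  have hc2 : ∀ t s : ℝ, HasDerivAt (fun s' : ℝ => (t, s')) ((0:ℝ), (1:ℝ)) s := by
    intro t s
    exact HasDerivAt.prodMk (hasDerivAt_const s t) (hasDerivAt_id s)
  have e1 : ∀ t s : ℝ, deriv (fun t' => F t' s) t = fderiv ℝ f (t, s) (1, 0) := by
    intro t s
    exact (keyf _ _ t (hc1 s t)).deriv
  have e2 : ∀ t s : ℝ, deriv (fun s' => F t s') s = fderiv ℝ f (t, s) (0, 1) := by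
    intro t s
    exact (keyf _ _ s (hc2 t s)).deriv
  have e11 : ∀ t s : ℝ, deriv (fun t' => deriv (fun t'' => F t'' s) t') t
      = fderiv ℝ (fderiv ℝ f) (t, s) (1, 0) (1, 0) := by
    intro t s
    have h : (fun t' => deriv (fun t'' => F t'' s) t') = fun t' => fderiv ℝ f (t', s) (1, 0) :=
      funext fun t' => e1 t' s
    rw [h]
    exact (keyD (1,0) _ _ t (hc1 s t)).deriv
  have e22 : ∀ t s : ℝ, deriv (fun s' => deriv (fun s'' => F t s'') s') s
      = fderiv ℝ (fderiv ℝ f) (t, s) (0, 1) (0, 1) := by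
    intro t s
    have h : (fun s' => deriv (fun s'' => F t s'') s') = fun s' => fderiv ℝ f (t, s') (0, 1) :=
      funext fun s' => e2 t s'
    rw [h]
    exact (keyD (0,1) _ _ s (hc2 t s)).deriv
  have e12 : ∀ t s : ℝ, deriv (fun s' => deriv (fun t' => F t' s') t) s
      = fderiv ℝ (fderiv ℝ f) (t, s) (0, 1) (1, 0) := by
    intro t s
    have h : (fun s' => deriv (fun t' => F t' s') t) = fun s' => fderiv ℝ f (t, s') (1, 0) :=
      funext fun s' => e1 t s'
    rw [h]
    exact (keyD (1,0) _ _ s (hc2 t s)).deriv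
  -- symmetry of the second derivative
  have hsym : ∀ x : ℝ × ℝ,
      fderiv ℝ (fderiv ℝ f) x (1, 0) (0, 1) = fderiv ℝ (fderiv ℝ f) x (0, 1) (1, 0) := by
    intro x
    exact second_derivative_symmetric (fun y => (hfd y).hasFDerivAt) (hfd1 x).hasFDerivAt _ _
  -- linearity decompositions
  have decomp : ((u, v) : ℝ × ℝ) = u • ((1:ℝ), (0:ℝ)) + v • ((0:ℝ), (1:ℝ)) := by
    simp [Prod.ext_iff]
  have lin1 : ∀ x : ℝ × ℝ, fderiv ℝ f x (u, v)
      = u * fderiv ℝ f x (1, 0) + v * fderiv ℝ f x (0, 1) := by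
    intro x
    rw [decomp, map_add, map_smul, map_smul]; simp
  have lin2 : ∀ (x : ℝ × ℝ) (w : ℝ × ℝ), fderiv ℝ (fderiv ℝ f) x (u, v) w
      = u * fderiv ℝ (fderiv ℝ f) x (1, 0) w + v * fderiv ℝ (fderiv ℝ f) x (0, 1) w := by
    intro x w
    rw [decomp, map_add, map_smul, map_smul]; simp
  -- rewrite the target function
  have hAeq : (fun τ =>
      1 / p * deriv (fun t' => F t' (τ * v)) (τ * u) * (τ * u) +
        1 / p * deriv (fun s' => F (τ * u) s') (τ * v) * (τ * v) -
          F (τ * u) (τ * v))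
      = fun τ =>
      1 / p * fderiv ℝ f (τ * u, τ * v) (1, 0) * (τ * u) +
        1 / p * fderiv ℝ f (τ * u, τ * v) (0, 1) * (τ * v) -
          f (τ * u, τ * v) := by
    funext τ
    rw [e1, e2]
    rfl
  rw [hAeq]
  -- the curve
  have hcurve : ∀ τ : ℝ, HasDerivAt (fun τ' : ℝ => (τ' * u, τ' * v)) ((u, v)) τ := by
    intro τ
    exact HasDerivAt.prodMk (hasDerivAt_mul_const u) (hasDerivAt_mul_const v)
  -- derivative of A
  have hA : ∀ τ : ℝ, HasDerivAt (fun τ =>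
      1 / p * fderiv ℝ f (τ * u, τ * v) (1, 0) * (τ * u) +
        1 / p * fderiv ℝ f (τ * u, τ * v) (0, 1) * (τ * v) -
          f (τ * u, τ * v))
      (1 / p * (fderiv ℝ (fderiv ℝ f) (τ * u, τ * v) (u, v) (1, 0) * (τ * u)
          + fderiv ℝ f (τ * u, τ * v) (1, 0) * u)
        + 1 / p * (fderiv ℝ (fderiv ℝ f) (τ * u, τ * v) (u, v) (0, 1) * (τ * v)
          + fderiv ℝ f (τ * u, τ * v) (0, 1) * v)
        - fderiv ℝ f (τ * u, τ * v) (u, v)) τ := by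
    intro τ
    have h1 := ((keyD (1,0) _ _ τ (hcurve τ)).mul (hasDerivAt_mul_const u)).const_mul (1/p)
    have h2 := ((keyD (0,1) _ _ τ (hcurve τ)).mul (hasDerivAt_mul_const v)).const_mul (1/p)
    have h3 := keyf _ _ τ (hcurve τ)
    have := (h1.add h2).sub h3
    refine this.congr_of_eventuallyEq (Filter.Eventually.of_forall fun x => ?_)
    simp only [Pi.add_apply, Pi.sub_apply, Pi.mul_apply]; ring
  apply strictMonoOn_of_deriv_pos (convex_Ioi 0)
  · have hAd : Differentiable ℝ _ := fun τ => (hA τ).differentiableAt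
    exact hAd.continuous.continuousOn
  · intro τ hτ
    rw [interior_Ioi] at hτ
    have hτ' : (0:ℝ) < τ := hτ
    rw [(hA τ).deriv]
    set t := τ * u
    set s := τ * v
    have hts : (t, s) ≠ (0, 0) := by
      intro h
      apply huv
      have ht : τ * u = 0 := congrArg Prod.fst h
      have hs : τ * v = 0 := congrArg Prod.snd h
      have hτ0 : τ ≠ 0 := ne_of_gt hτ
      have hu : u = 0 := by
        rcases mul_eq_zero.mp ht with h | h
        · exact absurd h hτ0
        · exact h
      have hv : v = 0 := by
        rcases mul_eq_zero.mp hs with h | h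
        · exact absurd h hτ0
        · exact h
      simp [hu, hv]
    obtain ⟨hI1, hI2⟩ := hF4 t s hts
    rw [max_eq_left hqp] at hI1 hI2
    rw [e1, e2] at hI1 hI2
    rw [e11, e22] at hI2
    have hM := hFts t s
    rw [e12] at hM
    rw [lin2, lin2, lin1, hsym (t, s)]
    set T := fderiv ℝ (fderiv ℝ f) (t, s) (1, 0) (1, 0)
    set M := fderiv ℝ (fderiv ℝ f) (t, s) (0, 1) (1, 0)
    set S := fderiv ℝ (fderiv ℝ f) (t, s) (0, 1) (0, 1)
    set P1 := fderiv ℝ f (t, s) (1, 0)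
    set P2 := fderiv ℝ f (t, s) (0, 1)
    -- key positivity: multiply through by p * τ > 0
    have key : 0 < τ * (1 / p * ((u * T + v * M) * t + P1 * u)
        + 1 / p * ((u * M + v * S) * s + P2 * v) - (u * P1 + v * P2)) := by
      have hexp : p * (τ * (1 / p * ((u * T + v * M) * t + P1 * u)
          + 1 / p * ((u * M + v * S) * s + P2 * v) - (u * P1 + v * P2)))
          = T * t ^ 2 + S * s ^ 2 + 2 * (M * t * s) - (p - 1) * (P1 * t + P2 * s) := by
        field_simp [t, s]
        ring
      have hpos : 0 < p * (τ * (1 / p * ((u * T + v * M) * t + P1 * u)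
          + 1 / p * ((u * M + v * S) * s + P2 * v) - (u * P1 + v * P2))) := by
        rw [hexp]
        nlinarith [hM]
      rcases mul_pos_iff.mp hpos with ⟨_, h⟩ | ⟨h1, _⟩
      · exact h
      · linarith
    rcases mul_pos_iff.mp key with ⟨_, h⟩ | ⟨h1, _⟩
    · exact h
    · linarith [hτ']
end

section
/- Let p, q > 1 with p ≥ q (so β = p), let (u,v) ∈ ℝ², (u,v) ≠ (0,0), and let F : ℝ² → ℝ be twice continuously differentiable satisfying F_{ts}(t,s)·t·s ≥ 0 and (β-1)(F_t(t,s)·t + F_s(t,s)·s) < F_{tt}(t,s)·t² + F_{ss}(t,s)·s² for all (t,s) ≠ (0,0). Then the function H(t) = t^{1-p}·(F_t(tu, tv)·u + F_s(tu, tv)·v) − t^{q-p}·c is strictly increasing on (0, +∞) for any constant c ≥ 0 in the case v = 0 or general (u,v) ≠ (0,0). -/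
open Set

set_option maxHeartbeats 1000000 in
theorem stmt_7 (p q : ℝ) (hp : 1 < p) (hq : 1 < q) (hqp : q ≤ p)
    (u v c : ℝ) (hc : 0 ≤ c) (huv : (u, v) ≠ (0, 0)) (F : ℝ → ℝ → ℝ)
    (hF : ContDiff ℝ 2 (Function.uncurry F))
    (hFts : ∀ t s : ℝ,
      deriv (fun s' => deriv (fun t' => F t' s') t) s * t * s ≥ 0)
    (hF4 : ∀ t s : ℝ, (t, s) ≠ (0, 0) →
      (p - 1) * (deriv (fun t' => F t' s) t * t + deriv (fun s' => F t s') s * s) <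
        deriv (fun t' => deriv (fun t'' => F t'' s) t') t * t ^ 2 +
          deriv (fun s' => deriv (fun s'' => F t s'') s') s * s ^ 2) :
    StrictMonoOn (fun t =>
      t ^ (1 - p) * (deriv (fun t' => F t' (t * v)) (t * u) * u +
        deriv (fun s' => F (t * u) s') (t * v) * v) - t ^ (q - p) * c)
      (Set.Ioi (0 : ℝ)) := by
  set f : ℝ × ℝ → ℝ := Function.uncurry F with hfdef
  have hdiff : Differentiable ℝ f := hF.differentiable (by norm_num)
  set f' : ℝ × ℝ → (ℝ × ℝ) →L[ℝ] ℝ := fderiv ℝ f with hf'def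
  have hf' : ∀ z, HasFDerivAt f (f' z) z := fun z => (hdiff z).hasFDerivAt
  have hf'C1 : ContDiff ℝ 1 f' := hF.fderiv_right (by norm_num)
  set B : ℝ × ℝ → (ℝ × ℝ) →L[ℝ] (ℝ × ℝ) →L[ℝ] ℝ := fderiv ℝ f' with hBdef
  have hB : ∀ z, HasFDerivAt f' (B z) z := fun z => ((hf'C1.differentiable (by norm_num)) z).hasFDerivAt
  have hsymm : ∀ z w₁ w₂, B z w₁ w₂ = B z w₂ w₁ := fun z w₁ w₂ =>
    second_derivative_symmetric hf' (hB z) w₁ w₂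
  -- first partial derivatives
  have hd1 : ∀ t s : ℝ, HasDerivAt (fun t' => F t' s) (f' (t, s) (1, 0)) t := by
    intro t s
    exact (hf' (t, s)).comp_hasDerivAt t ((hasDerivAt_id t).prodMk (hasDerivAt_const t s))
  have hd2 : ∀ t s : ℝ, HasDerivAt (fun s' => F t s') (f' (t, s) (0, 1)) s := by
    intro t s
    exact (hf' (t, s)).comp_hasDerivAt s ((hasDerivAt_const s t).prodMk (hasDerivAt_id s))
  have P1 : ∀ t s : ℝ, deriv (fun t' => F t' s) t = f' (t, s) (1, 0) := fun t s => (hd1 t s).deriv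
  have P2 : ∀ t s : ℝ, deriv (fun s' => F t s') s = f' (t, s) (0, 1) := fun t s => (hd2 t s).deriv
  -- second partial derivatives
  have hd11 : ∀ t s : ℝ, HasDerivAt (fun t' => f' (t', s) (1, 0)) (B (t, s) (1, 0) (1, 0)) t := by
    intro t s
    have h2 := (hB (t, s)).comp_hasDerivAt t ((hasDerivAt_id t).prodMk (hasDerivAt_const t s))
    exact by have h3 := (ContinuousLinearMap.apply ℝ ℝ ((1 : ℝ), (0 : ℝ))).hasFDerivAt.comp_hasDerivAt t h2; exact h3
  have hd21 : ∀ t s : ℝ, HasDerivAt (fun s' => f' (t, s') (1, 0)) (B (t, s) (0, 1) (1, 0)) s := by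
    intro t s
    have h2 := (hB (t, s)).comp_hasDerivAt s ((hasDerivAt_const s t).prodMk (hasDerivAt_id s))
    exact by have h3 := (ContinuousLinearMap.apply ℝ ℝ ((1 : ℝ), (0 : ℝ))).hasFDerivAt.comp_hasDerivAt s h2; exact h3
  have hd22 : ∀ t s : ℝ, HasDerivAt (fun s' => f' (t, s') (0, 1)) (B (t, s) (0, 1) (0, 1)) s := by
    intro t s
    have h2 := (hB (t, s)).comp_hasDerivAt s ((hasDerivAt_const s t).prodMk (hasDerivAt_id s))
    exact by have h3 := (ContinuousLinearMap.apply ℝ ℝ ((0 : ℝ), (1 : ℝ))).hasFDerivAt.comp_hasDerivAt s h2; exact h3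
  have P11 : ∀ t s : ℝ, deriv (fun t' => deriv (fun t'' => F t'' s) t') t = B (t, s) (1, 0) (1, 0) := by
    intro t s
    have he : (fun t' => deriv (fun t'' => F t'' s) t') = fun t' => f' (t', s) (1, 0) :=
      funext fun t' => P1 t' s
    rw [he]; exact (hd11 t s).deriv
  have P21 : ∀ t s : ℝ, deriv (fun s' => deriv (fun t' => F t' s') t) s = B (t, s) (0, 1) (1, 0) := by
    intro t s
    have he : (fun s' => deriv (fun t' => F t' s') t) = fun s' => f' (t, s') (1, 0) :=
      funext fun s' => P1 t s'
    rw [he]; exact (hd21 t s).deriv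
  have P22 : ∀ t s : ℝ, deriv (fun s' => deriv (fun s'' => F t s'') s') s = B (t, s) (0, 1) (0, 1) := by
    intro t s
    have he : (fun s' => deriv (fun s'' => F t s'') s') = fun s' => f' (t, s') (0, 1) :=
      funext fun s' => P2 t s'
    rw [he]; exact (hd22 t s).deriv
  -- linearity expansions
  have huv' : ((u, v) : ℝ × ℝ) = u • ((1 : ℝ), (0 : ℝ)) + v • ((0 : ℝ), (1 : ℝ)) := by
    simp [Prod.ext_iff]
  have happ : ∀ z : ℝ × ℝ, f' z (u, v) = f' z (1, 0) * u + f' z (0, 1) * v := by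
    intro z
    rw [huv', map_add, map_smul, map_smul, smul_eq_mul, smul_eq_mul]; ring
  have hbil : ∀ z : ℝ × ℝ, B z (u, v) (u, v) =
      B z (1, 0) (1, 0) * u ^ 2 + 2 * B z (0, 1) (1, 0) * (u * v) + B z (0, 1) (0, 1) * v ^ 2 := by
    intro z
    rw [huv', map_add, map_smul, map_smul]
    simp only [ContinuousLinearMap.add_apply, ContinuousLinearMap.coe_smul',
      Pi.smul_apply, map_add, map_smul, smul_eq_mul]
    linear_combination u * v * hsymm z (1, 0) (0, 1)
  -- the derivative of G t = f' (t*u, t*v) (u, v)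
  have hline : ∀ t : ℝ, HasDerivAt (fun r : ℝ => ((r * u, r * v) : ℝ × ℝ)) (u, v) t := by
    intro t
    have h1 : HasDerivAt (fun r : ℝ => r * u) u t := by
      simpa using (hasDerivAt_id t).mul_const u
    have h2 : HasDerivAt (fun r : ℝ => r * v) v t := by
      simpa using (hasDerivAt_id t).mul_const v
    exact h1.prodMk h2
  have hGd : ∀ t : ℝ, HasDerivAt (fun r : ℝ => f' (r * u, r * v) (u, v))
      (B (t * u, t * v) (u, v) (u, v)) t := by
    intro t
    have h2 := (hB (t * u, t * v)).comp_hasDerivAt t (hline t)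
    exact by have h3 := (ContinuousLinearMap.apply ℝ ℝ ((u, v) : ℝ × ℝ)).hasFDerivAt.comp_hasDerivAt t h2; exact h3
  -- rewrite the goal function
  have hfun : (fun t : ℝ =>
      t ^ (1 - p) * (deriv (fun t' => F t' (t * v)) (t * u) * u +
        deriv (fun s' => F (t * u) s') (t * v) * v) - t ^ (q - p) * c)
      = fun t : ℝ => t ^ (1 - p) * f' (t * u, t * v) (u, v) - t ^ (q - p) * c := by
    funext t
    rw [P1, P2, ← happ]
  rw [hfun]
  have hH : ∀ t : ℝ, 0 < t → HasDerivAt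
      (fun t : ℝ => t ^ (1 - p) * f' (t * u, t * v) (u, v) - t ^ (q - p) * c)
      ((1 - p) * t ^ (1 - p - 1) * f' (t * u, t * v) (u, v)
        + t ^ (1 - p) * B (t * u, t * v) (u, v) (u, v)
        - (q - p) * t ^ (q - p - 1) * c) t := by
    intro t ht
    have ha := (Real.hasDerivAt_rpow_const (p := 1 - p) (Or.inl ht.ne')).mul (hGd t)
    have hb := (Real.hasDerivAt_rpow_const (p := q - p) (Or.inl ht.ne')).mul_const c
    exact ha.sub hb
  apply strictMonoOn_of_deriv_pos (convex_Ioi 0)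
  · intro t ht
    exact (hH t ht).continuousAt.continuousWithinAt
  · intro t ht
    rw [interior_Ioi] at ht
    have ht : (0 : ℝ) < t := ht
    rw [(hH t ht).deriv]
    have hz : ((t * u, t * v) : ℝ × ℝ) ≠ (0, 0) := by
      intro h
      rw [Prod.ext_iff] at h
      obtain ⟨h1, h2⟩ := h
      apply huv
      rw [Prod.ext_iff]
      constructor
      · rcases mul_eq_zero.mp h1 with h | h
        · exact absurd h ht.ne'
        · exact h
      · rcases mul_eq_zero.mp h2 with h | h
        · exact absurd h ht.ne'
        · exact h
    have K1 := hF4 (t * u) (t * v) hz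
    rw [P1, P2, P11, P22] at K1
    have K2 := hFts (t * u) (t * v)
    rw [P21] at K2
    rw [happ, hbil]
    set A1 := f' (t * u, t * v) (1, 0) with hA1
    set A2 := f' (t * u, t * v) (0, 1) with hA2
    set B11 := B (t * u, t * v) (1, 0) (1, 0) with hB11
    set B21 := B (t * u, t * v) (0, 1) (1, 0) with hB21
    set B22 := B (t * u, t * v) (0, 1) (0, 1) with hB22
    clear_value A1 A2 B11 B21 B22
    -- exponent identities
    have e1 : t ^ (1 - p) = t ^ (1 - p - 1) * t := by
      rw [← Real.rpow_add_one ht.ne']; ring_nf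
    have e2 : t ^ (q - p) = t ^ (q - p - 1) * t := by
      rw [← Real.rpow_add_one ht.ne']; ring_nf
    have hT1 : (0 : ℝ) < t ^ (1 - p - 1) := Real.rpow_pos_of_pos ht _
    have hT3 : (0 : ℝ) < t ^ (q - p - 1) := Real.rpow_pos_of_pos ht _
    -- key positivity
    have hL : 0 < (1 - p) * (A1 * u + A2 * v) + t * (B11 * u ^ 2 + 2 * B21 * (u * v) + B22 * v ^ 2) := by
      have hstep : 0 < t * ((1 - p) * (A1 * u + A2 * v)
          + t * (B11 * u ^ 2 + 2 * B21 * (u * v) + B22 * v ^ 2)) := by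
        have : t * ((1 - p) * (A1 * u + A2 * v)
            + t * (B11 * u ^ 2 + 2 * B21 * (u * v) + B22 * v ^ 2))
            = (1 - p) * (A1 * (t * u) + A2 * (t * v))
              + (B11 * (t * u) ^ 2 + B22 * (t * v) ^ 2) + 2 * (B21 * (t * u) * (t * v)) := by
          ring
        rw [this]
        nlinarith [K1, K2]
      nlinarith [hstep, ht]
    have hc' : 0 ≤ (p - q) * t ^ (q - p - 1) * c :=
      mul_nonneg (mul_nonneg (sub_nonneg.mpr hqp) hT3.le) hc
    rw [e1]
    have key : (1 - p) * t ^ (1 - p - 1) * (A1 * u + A2 * v)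
        + t ^ (1 - p - 1) * t * (B11 * u ^ 2 + 2 * B21 * (u * v) + B22 * v ^ 2)
        - (q - p) * t ^ (q - p - 1) * c
        = t ^ (1 - p - 1) * ((1 - p) * (A1 * u + A2 * v)
            + t * (B11 * u ^ 2 + 2 * B21 * (u * v) + B22 * v ^ 2))
          + (p - q) * t ^ (q - p - 1) * c := by ring
    rw [key]
    have := mul_pos hT1 hL
    linarith
end

section
/- Let p, q > 1 and let F : ℝ² → ℝ be twice continuously differentiable with F(0,0) = 0, satisfying F_{ts}(t,s)·t·s ≥ 0 and 0 < (max{p,q}-1)(F_t(t,s)·t + F_s(t,s)·s) < F_{tt}(t,s)·t² + F_{ss}(t,s)·s² for all (t,s) ≠ (0,0). Fix (u,v) ∈ ℝ² nonzero and A, B > 0, and define g(t) = (t^p/p)·A + (t^q/q)·B − F(tu, tv) for t > 0. If g'(1) = 0 (i.e., A + B = F_t(u,v)·u + F_s(u,v)·v with A, B playing the role of ‖u‖^p, ‖v‖^q), then g''(1) < 0. -/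
set_option maxHeartbeats 1000000 in
theorem stmt_16 (p q : ℝ) (hp : 1 < p) (hq : 1 < q) (F : ℝ → ℝ → ℝ)
    (hF : ContDiff ℝ 2 (Function.uncurry F)) (hF0 : F 0 0 = 0)
    (hFts : ∀ t s : ℝ,
      deriv (fun s' => deriv (fun t' => F t' s') t) s * t * s ≥ 0)
    (hF4 : ∀ t s : ℝ, (t, s) ≠ (0, 0) →
      0 < (max p q - 1) *
          (deriv (fun t' => F t' s) t * t + deriv (fun s' => F t s') s * s) ∧
        (max p q - 1) *
            (deriv (fun t' => F t' s) t * t + deriv (fun s' => F t s') s * s) <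
          deriv (fun t' => deriv (fun t'' => F t'' s) t') t * t ^ 2 +
            deriv (fun s' => deriv (fun s'' => F t s'') s') s * s ^ 2)
    (u v A B : ℝ) (huv : (u, v) ≠ (0, 0)) (hA : 0 < A) (hB : 0 < B)
    (hNehari : A + B = deriv (fun t' => F t' v) u * u + deriv (fun s' => F u s') v * v) :
    deriv (deriv (fun t : ℝ => t ^ p / p * A + t ^ q / q * B - F (t * u) (t * v))) 1 < 0 := by
  set f : ℝ × ℝ → ℝ := Function.uncurry F with hf
  set G : ℝ × ℝ → (ℝ × ℝ) →L[ℝ] ℝ := fun x => fderiv ℝ f x with hGdef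
  have hFd : Differentiable ℝ f := hF.differentiable (by norm_num)
  have hG : ContDiff ℝ 1 G := hF.fderiv_right (by norm_num)
  have hGd : Differentiable ℝ G := hG.differentiable one_ne_zero
  -- curves
  have hcurve : ∀ (c : ℝ → ℝ × ℝ) (c' : ℝ × ℝ) (x : ℝ), HasDerivAt c c' x →
      HasDerivAt (fun t => f (c t)) ((G (c x)) c') x := by
    intro c c' x hc
    exact ((hFd (c x)).hasFDerivAt).comp_hasDerivAt x hc
  have hcurve2 : ∀ (w : ℝ × ℝ) (c : ℝ → ℝ × ℝ) (c' : ℝ × ℝ) (x : ℝ), HasDerivAt c c' x →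
      HasDerivAt (fun t => (G (c t)) w) (((fderiv ℝ G (c x)) c') w) x := by
    intro w c c' x hc
    have h1 : HasDerivAt (fun t => G (c t)) ((fderiv ℝ G (c x)) c') x :=
      ((hGd (c x)).hasFDerivAt).comp_hasDerivAt x hc
    exact ((ContinuousLinearMap.apply ℝ ℝ w).hasFDerivAt).comp_hasDerivAt x h1
  -- first partial derivatives
  have hline1 : ∀ (x y : ℝ), HasDerivAt (fun t' => ((t', y) : ℝ × ℝ)) ((1, 0) : ℝ × ℝ) x := by
    intro x y; exact (hasDerivAt_id x).prodMk (hasDerivAt_const x y)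
  have hline2 : ∀ (x y : ℝ), HasDerivAt (fun s' => ((x, s') : ℝ × ℝ)) ((0, 1) : ℝ × ℝ) y := by
    intro x y; exact (hasDerivAt_const y x).prodMk (hasDerivAt_id y)
  have hpart1 : ∀ x y : ℝ, deriv (fun t' => F t' y) x = (G (x, y)) (1, 0) := by
    intro x y
    exact (hcurve _ _ x (hline1 x y)).deriv
  have hpart2 : ∀ x y : ℝ, deriv (fun s' => F x s') y = (G (x, y)) (0, 1) := by
    intro x y
    exact (hcurve _ _ y (hline2 x y)).deriv
  -- second partials
  have hpart11 : ∀ x y : ℝ, deriv (fun t' => deriv (fun t'' => F t'' y) t') x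
      = ((fderiv ℝ G (x, y)) (1, 0)) (1, 0) := by
    intro x y
    have : (fun t' => deriv (fun t'' => F t'' y) t') = fun t' => (G (t', y)) (1, 0) := by
      funext t'; exact hpart1 t' y
    rw [this]
    exact (hcurve2 _ _ _ x (hline1 x y)).deriv
  have hpart21 : ∀ x y : ℝ, deriv (fun s' => deriv (fun t' => F t' s') x) y
      = ((fderiv ℝ G (x, y)) (0, 1)) (1, 0) := by
    intro x y
    have : (fun s' => deriv (fun t' => F t' s') x) = fun s' => (G (x, s')) (1, 0) := by
      funext s'; exact hpart1 x s'
    rw [this]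
    exact (hcurve2 _ _ _ y (hline2 x y)).deriv
  have hpart22 : ∀ x y : ℝ, deriv (fun s' => deriv (fun s'' => F x s'') s') y
      = ((fderiv ℝ G (x, y)) (0, 1)) (0, 1) := by
    intro x y
    have : (fun s' => deriv (fun s'' => F x s'') s') = fun s' => (G (x, s')) (0, 1) := by
      funext s'; exact hpart2 x s'
    rw [this]
    exact (hcurve2 _ _ _ y (hline2 x y)).deriv
  -- symmetry of second derivative
  have hsymm : ∀ x : ℝ × ℝ, ((fderiv ℝ G x) (1, 0)) (0, 1) = ((fderiv ℝ G x) (0, 1)) (1, 0) := by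
    intro x
    exact second_derivative_symmetric (fun y => (hFd y).hasFDerivAt)
      ((hGd x).hasFDerivAt) _ _
  -- the inner curve ψ t = (t*u, t*v)
  have hψ : ∀ t : ℝ, HasDerivAt (fun t' : ℝ => ((t' * u, t' * v) : ℝ × ℝ)) ((u, v) : ℝ × ℝ) t := by
    intro t
    have h1 : HasDerivAt (fun t' : ℝ => t' * u) u t := by
      simpa using (hasDerivAt_id t).mul_const u
    have h2 : HasDerivAt (fun t' : ℝ => t' * v) v t := by
      simpa using (hasDerivAt_id t).mul_const v
    exact h1.prodMk h2
  -- first derivative of g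
  have hg' : deriv (fun t : ℝ => t ^ p / p * A + t ^ q / q * B - F (t * u) (t * v))
      = fun t : ℝ => t ^ (p - 1) * A + t ^ (q - 1) * B - (G ((t * u, t * v))) (u, v) := by
    funext t
    have h1 : HasDerivAt (fun t : ℝ => t ^ p / p * A) (t ^ (p - 1) * A) t := by
      have := ((Real.hasDerivAt_rpow_const (p := p) (x := t) (Or.inr hp.le)).div_const p).mul_const A
      refine this.congr_deriv ?_
      field_simp
    have h2 : HasDerivAt (fun t : ℝ => t ^ q / q * B) (t ^ (q - 1) * B) t := by
      have := ((Real.hasDerivAt_rpow_const (p := q) (x := t) (Or.inr hq.le)).div_const q).mul_const B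
      refine this.congr_deriv ?_
      field_simp
    have h3 : HasDerivAt (fun t : ℝ => F (t * u) (t * v)) ((G ((t * u, t * v))) (u, v)) t :=
      hcurve _ _ t (hψ t)
    exact ((h1.add h2).sub h3).deriv
  rw [hg']
  -- second derivative at 1
  have h1 : HasDerivAt (fun t : ℝ => t ^ (p - 1) * A) ((p - 1) * A) (1 : ℝ) := by
    have := (Real.hasDerivAt_rpow_const (p := p - 1) (x := 1) (Or.inl one_ne_zero)).mul_const A
    simpa using this
  have h2 : HasDerivAt (fun t : ℝ => t ^ (q - 1) * B) ((q - 1) * B) (1 : ℝ) := by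
    have := (Real.hasDerivAt_rpow_const (p := q - 1) (x := 1) (Or.inl one_ne_zero)).mul_const B
    simpa using this
  have h3 : HasDerivAt (fun t : ℝ => (G ((t * u, t * v))) (u, v))
      (((fderiv ℝ G (u, v)) (u, v)) (u, v)) (1 : ℝ) := by
    have := hcurve2 (u, v) (fun t' : ℝ => ((t' * u, t' * v) : ℝ × ℝ)) (u, v) 1 (hψ 1)
    simpa using this
  have hderiv2 : deriv (fun t : ℝ => t ^ (p - 1) * A + t ^ (q - 1) * B
      - (G ((t * u, t * v))) (u, v)) 1
      = (p - 1) * A + (q - 1) * B - ((fderiv ℝ G (u, v)) (u, v)) (u, v) :=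
    ((h1.add h2).sub h3).deriv
  rw [hderiv2]
  -- expand the bilinear form
  set H := fderiv ℝ G (u, v) with hH
  have hexp : (H (u, v)) (u, v)
      = u * u * (H (1, 0)) (1, 0) + u * v * (H (1, 0)) (0, 1)
        + v * u * (H (0, 1)) (1, 0) + v * v * (H (0, 1)) (0, 1) := by
    have huv2 : ((u, v) : ℝ × ℝ) = u • ((1, 0) : ℝ × ℝ) + v • ((0, 1) : ℝ × ℝ) := by
      simp [Prod.ext_iff]
    rw [huv2]
    simp only [map_add, map_smul, ContinuousLinearMap.add_apply,
      ContinuousLinearMap.smul_apply, smul_eq_mul]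
    ring
  -- rewrite hypotheses
  have h4 := hF4 u v huv
  rw [hpart1, hpart2, hpart11, hpart22, ← hH] at h4
  have h5 := hFts u v
  rw [hpart21, ← hH] at h5
  rw [hpart1, hpart2] at hNehari
  have hsym := hsymm (u, v)
  rw [← hH] at hsym
  rw [hexp, hsym]
  -- final inequality
  have hpm : p - 1 ≤ max p q - 1 := by
    have := le_max_left p q; linarith
  have hqm : q - 1 ≤ max p q - 1 := by
    have := le_max_right p q; linarith
  have key : (max p q - 1) * (A + B) < (H (1, 0)) (1, 0) * u ^ 2 + (H (0, 1)) (0, 1) * v ^ 2 := by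
    rw [hNehari]; exact h4.2
  have e1 : (p - 1) * A ≤ (max p q - 1) * A := mul_le_mul_of_nonneg_right hpm hA.le
  have e2 : (q - 1) * B ≤ (max p q - 1) * B := mul_le_mul_of_nonneg_right hqm hB.le
  have hvu : v * u * (H (0, 1)) (1, 0) = (H (0, 1)) (1, 0) * u * v := by ring
  have huu : u * u * (H (1, 0)) (1, 0) = (H (1, 0)) (1, 0) * u ^ 2 := by ring
  have hvv : v * v * (H (0, 1)) (0, 1) = (H (0, 1)) (0, 1) * v ^ 2 := by ring
  have huv' : u * v * (H (0, 1)) (1, 0) = (H (0, 1)) (1, 0) * u * v := by ring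
  linarith [h5]
end

section
/- Let p > 1, θ ∈ [1, p), and let V be a countable set with measure μ : V → (0,∞) bounded below by μ_min > 0, a : V → [0,∞) with K := ∑_{x∈V} μ(x)(a(x)+1)^{-1/(p-1)} < ∞, and λ ≥ 1. Then for any ψ : V → ℝ with N := (∑_{x∈V} μ(x)(λa(x)+1)|ψ(x)|^p)^{1/p} < ∞ (noting this dominates both sup-norm and weighted terms), one has (∑_{x∈V} μ(x)|ψ(x)|^θ)^{1/θ} ≤ (1/μ_min)^{(θ-1)/(pθ)} · K^{(p-1)/(pθ)} · N. -/
theorem stmt_19 (V : Type*) [Countable V] (μ : V → ℝ) (μmin : ℝ) (hμmin : 0 < μmin)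
    (hμ : ∀ x, μmin ≤ μ x) (p θ lam : ℝ) (hp : 1 < p) (hθ1 : 1 ≤ θ) (hθp : θ < p)
    (hlam : 1 ≤ lam) (a : V → ℝ) (ha : ∀ x, 0 ≤ a x) (K N : ℝ)
    (hKsum : Summable (fun x => μ x * (a x + 1) ^ (-(1 / (p - 1)))))
    (hK : K = ∑' x, μ x * (a x + 1) ^ (-(1 / (p - 1))))
    (ψ : V → ℝ)
    (hψ : Summable (fun x => μ x * (lam * a x + 1) * |ψ x| ^ p))
    (hN : N = (∑' x, μ x * (lam * a x + 1) * |ψ x| ^ p) ^ (1 / p)) :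
    (∑' x, μ x * |ψ x| ^ θ) ^ (1 / θ) ≤
      (1 / μmin) ^ ((θ - 1) / (p * θ)) * K ^ ((p - 1) / (p * θ)) * N := by
  have hp0 : (0:ℝ) < p := lt_trans one_pos hp
  have hθ0 : (0:ℝ) < θ := lt_of_lt_of_le one_pos hθ1
  have hμx : ∀ x, 0 < μ x := fun x => lt_of_lt_of_le hμmin (hμ x)
  have ha1 : ∀ x, (0:ℝ) < a x + 1 := fun x => by have := ha x; linarith
  have hla1 : ∀ x, (1:ℝ) ≤ lam * a x + 1 := fun x => by nlinarith [ha x]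
  have hpq : p.HolderConjugate (p / (p - 1)) := Real.HolderConjugate.conjExponent hp
  set q : ℝ := p / (p - 1) with hqdef
  have hq0 : 0 < q := hpq.symm.pos
  set S := ∑' x, μ x * (lam * a x + 1) * |ψ x| ^ p with hSdef
  have hterm : ∀ x, 0 ≤ μ x * (lam * a x + 1) * |ψ x| ^ p := fun x => by
    have h1 := (hμx x).le
    have h2 : (0:ℝ) ≤ lam * a x + 1 := le_trans zero_le_one (hla1 x)
    have h3 : (0:ℝ) ≤ |ψ x| ^ p := Real.rpow_nonneg (abs_nonneg _) _
    positivity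
  have hS0 : 0 ≤ S := tsum_nonneg hterm
  have hN0 : 0 ≤ N := hN ▸ Real.rpow_nonneg hS0 _
  have hKnn : ∀ x, 0 ≤ μ x * (a x + 1) ^ (-(1 / (p - 1))) := fun x => by
    have h1 := (hμx x).le
    have h2 : (0:ℝ) ≤ (a x + 1) ^ (-(1 / (p - 1))) := Real.rpow_nonneg (ha1 x).le _
    positivity
  have hK0 : 0 ≤ K := hK ▸ tsum_nonneg hKnn
  have hSN : S ^ (1/p) = N := hN.symm
  -- sup bound
  have hsup : ∀ x, |ψ x| ≤ (1/μmin) ^ (1/p) * N := by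
    intro x
    have h1 : μmin * |ψ x| ^ p ≤ μ x * (lam * a x + 1) * |ψ x| ^ p := by
      apply mul_le_mul_of_nonneg_right _ (Real.rpow_nonneg (abs_nonneg _) _)
      calc μmin ≤ μ x := hμ x
        _ = μ x * 1 := (mul_one _).symm
        _ ≤ μ x * (lam * a x + 1) := mul_le_mul_of_nonneg_left (hla1 x) (hμx x).le
    have h2 : μ x * (lam * a x + 1) * |ψ x| ^ p ≤ S :=
      Summable.le_tsum hψ x (fun j _ => hterm j)
    have h3 : |ψ x| ^ p ≤ (1/μmin) * S := by
      rw [one_div, inv_mul_eq_div, le_div_iff₀ hμmin]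
      calc |ψ x| ^ p * μmin = μmin * |ψ x| ^ p := mul_comm _ _
        _ ≤ S := h1.trans h2
    have h4 := Real.rpow_le_rpow (Real.rpow_nonneg (abs_nonneg _) _) h3
      (by positivity : (0:ℝ) ≤ 1/p)
    have h5 : (|ψ x| ^ p) ^ (1/p) = |ψ x| := by
      rw [← Real.rpow_mul (abs_nonneg _), mul_one_div, div_self hp0.ne', Real.rpow_one]
    have h6 : ((1/μmin) * S) ^ (1/p) = (1/μmin) ^ (1/p) * N := by
      rw [Real.mul_rpow (by positivity) hS0, hSN]
    rw [h5, h6] at h4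
    exact h4
  -- Hölder
  set f : V → ℝ := fun x => (μ x * (a x + 1) ^ (-(1 / (p - 1)))) ^ (1/q) with hfdef
  set g : V → ℝ := fun x => (μ x * (a x + 1) * |ψ x| ^ p) ^ (1/p) with hgdef
  have hf0 : ∀ x, 0 ≤ f x := fun x => Real.rpow_nonneg (hKnn x) _
  have hg0 : ∀ x, 0 ≤ g x := fun x => Real.rpow_nonneg
    (by have h1 := (hμx x).le
        have h2 : (0:ℝ) ≤ |ψ x| ^ p := Real.rpow_nonneg (abs_nonneg _) _
        have h3 := (ha1 x).le
        positivity) _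
  have hfq : ∀ x, f x ^ q = μ x * (a x + 1) ^ (-(1 / (p - 1))) := fun x => by
    rw [hfdef, ← Real.rpow_mul (hKnn x), one_div_mul_cancel hq0.ne', Real.rpow_one]
  have hgp : ∀ x, g x ^ p = μ x * (a x + 1) * |ψ x| ^ p := fun x => by
    have h1 : (0:ℝ) ≤ μ x * (a x + 1) * |ψ x| ^ p := by
      have h2 := (hμx x).le
      have h3 : (0:ℝ) ≤ |ψ x| ^ p := Real.rpow_nonneg (abs_nonneg _) _
      have h4 := (ha1 x).le
      positivity
    rw [hgdef, ← Real.rpow_mul h1, one_div_mul_cancel hp0.ne', Real.rpow_one]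
  have hfg : ∀ x, f x * g x = μ x * |ψ x| := fun x => by
    have hμn := (hμx x).le
    have han := (ha1 x).le
    have hψp : (0:ℝ) ≤ |ψ x| ^ p := Real.rpow_nonneg (abs_nonneg _) _
    have e1 : (-(1 / (p - 1))) * (1/q) = -(1/p) := by
      rw [hqdef]
      have h1 : p - 1 ≠ 0 := by linarith
      field_simp
    have e2 : (1:ℝ)/q + 1/p = 1 := by
      have := hpq.inv_add_inv_eq_one
      rw [one_div, one_div]; linarith
    simp only [hfdef, hgdef]
    rw [Real.mul_rpow hμn (Real.rpow_nonneg han _),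
        Real.mul_rpow (mul_nonneg hμn han) hψp,
        Real.mul_rpow hμn han,
        ← Real.rpow_mul han, ← Real.rpow_mul (abs_nonneg _),
        mul_one_div p, div_self hp0.ne', Real.rpow_one, e1]
    rw [show μ x ^ (1/q) * (a x + 1) ^ (-(1/p)) * (μ x ^ (1/p) * (a x + 1) ^ (1/p) * |ψ x|)
        = (μ x ^ (1/q) * μ x ^ (1/p)) * ((a x + 1) ^ (-(1/p)) * (a x + 1) ^ (1/p)) * |ψ x|
        from by ring]
    rw [← Real.rpow_add (hμx x), ← Real.rpow_add (ha1 x), e2, neg_add_cancel,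
        Real.rpow_one, Real.rpow_zero, mul_one]
  have hfsum : Summable (fun x => f x ^ q) := by
    simpa only [hfq] using hKsum
  have hgple : ∀ x, g x ^ p ≤ μ x * (lam * a x + 1) * |ψ x| ^ p := fun x => by
    rw [hgp x]
    have h1 : a x + 1 ≤ lam * a x + 1 := by nlinarith [ha x]
    have h2 : (0:ℝ) ≤ |ψ x| ^ p := Real.rpow_nonneg (abs_nonneg _) _
    have h3 := (hμx x).le
    gcongr
  have hgsum : Summable (fun x => g x ^ p) :=
    Summable.of_nonneg_of_le (fun x => Real.rpow_nonneg (hg0 x) _) hgple hψ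
  obtain ⟨hs1, hle1⟩ :=
    Real.summable_and_inner_le_Lp_mul_Lq_tsum_of_nonneg hpq.symm hf0 hg0 hfsum hgsum
  have hsum_fg : Summable (fun x => μ x * |ψ x|) := by
    simpa only [hfg] using hs1
  have hfqsum_eq : ∑' x, f x ^ q = K := by rw [hK]; exact tsum_congr hfq
  have hgp_tsum_le : ∑' x, g x ^ p ≤ S := Summable.tsum_le_tsum hgple hgsum hψ
  have h7 : (∑' x, g x ^ p) ^ (1/p) ≤ N := by
    rw [← hSN]
    exact Real.rpow_le_rpow (tsum_nonneg fun x => Real.rpow_nonneg (hg0 x) _)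
      hgp_tsum_le (by positivity)
  have hHolder : ∑' x, μ x * |ψ x| ≤ K ^ (1/q) * N := by
    calc ∑' x, μ x * |ψ x| = ∑' x, f x * g x := (tsum_congr hfg).symm
      _ ≤ (∑' x, f x ^ q) ^ (1/q) * (∑' x, g x ^ p) ^ (1/p) := hle1
      _ = K ^ (1/q) * (∑' x, g x ^ p) ^ (1/p) := by rw [hfqsum_eq]
      _ ≤ K ^ (1/q) * N := mul_le_mul_of_nonneg_left h7 (Real.rpow_nonneg hK0 _)
  -- main estimate
  set d : ℝ := (1/μmin) ^ (1/p) with hddef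
  have hd0 : 0 ≤ d := Real.rpow_nonneg (by positivity) _
  have hkey : ∀ x, μ x * |ψ x| ^ θ ≤ (d*N)^(θ-1) * (μ x * |ψ x|) := fun x => by
    have h8 : |ψ x| ^ θ = |ψ x| ^ (θ-1) * |ψ x| := by
      have h := Real.rpow_add' (abs_nonneg (ψ x))
        (show θ - 1 + 1 ≠ 0 by rw [sub_add_cancel]; exact hθ0.ne')
      rw [sub_add_cancel] at h
      rw [h, Real.rpow_one]
    have h9 : |ψ x| ^ (θ-1) ≤ (d*N)^(θ-1) :=
      Real.rpow_le_rpow (abs_nonneg _) (hsup x) (by linarith)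
    calc μ x * |ψ x| ^ θ = |ψ x| ^ (θ-1) * (μ x * |ψ x|) := by rw [h8]; ring
      _ ≤ (d*N)^(θ-1) * (μ x * |ψ x|) :=
        mul_le_mul_of_nonneg_right h9 (mul_nonneg (hμx x).le (abs_nonneg _))
  have hθnn : ∀ x, 0 ≤ μ x * |ψ x| ^ θ := fun x =>
    mul_nonneg (hμx x).le (Real.rpow_nonneg (abs_nonneg _) _)
  have hsumθ : Summable (fun x => μ x * |ψ x| ^ θ) :=
    Summable.of_nonneg_of_le hθnn hkey (hsum_fg.mul_left _)
  have hmain : ∑' x, μ x * |ψ x| ^ θ ≤ (d*N)^(θ-1) * (K^(1/q) * N) := by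
    calc ∑' x, μ x * |ψ x| ^ θ ≤ ∑' x, (d*N)^(θ-1) * (μ x * |ψ x|) :=
          Summable.tsum_le_tsum hkey hsumθ (hsum_fg.mul_left _)
      _ = (d*N)^(θ-1) * ∑' x, μ x * |ψ x| := tsum_mul_left
      _ ≤ (d*N)^(θ-1) * (K^(1/q) * N) :=
          mul_le_mul_of_nonneg_left hHolder (Real.rpow_nonneg (mul_nonneg hd0 hN0) _)
  have hfin := Real.rpow_le_rpow (tsum_nonneg hθnn) hmain (by positivity : (0:ℝ) ≤ 1/θ)
  refine hfin.trans_eq ?_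
  have hq_eq : (1:ℝ)/q = (p-1)/p := by rw [hqdef, one_div, inv_div]
  have hRe : (d*N)^(θ-1) * (K^(1/q) * N)
      = (1/μmin) ^ ((θ-1)/p) * K ^ ((p-1)/p) * N ^ θ := by
    have hNθ : N ^ (θ-1) * N = N ^ θ := by
      have h := Real.rpow_add' hN0 (show θ - 1 + 1 ≠ 0 by rw [sub_add_cancel]; exact hθ0.ne')
      rw [sub_add_cancel] at h
      rw [h, Real.rpow_one]
    rw [Real.mul_rpow hd0 hN0, hddef, ← Real.rpow_mul (by positivity : (0:ℝ) ≤ 1/μmin),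
        hq_eq, show 1/p*(θ-1) = (θ-1)/p from by ring, ← hNθ]
    ring
  rw [hRe]
  have hmn : (0:ℝ) ≤ (1/μmin) ^ ((θ-1)/p) := Real.rpow_nonneg (by positivity) _
  have hKn : (0:ℝ) ≤ K ^ ((p-1)/p) := Real.rpow_nonneg hK0 _
  rw [Real.mul_rpow (mul_nonneg hmn hKn) (Real.rpow_nonneg hN0 _),
      Real.mul_rpow hmn hKn,
      ← Real.rpow_mul (by positivity : (0:ℝ) ≤ 1/μmin),
      ← Real.rpow_mul hK0, ← Real.rpow_mul hN0,
      div_mul_div_comm, div_mul_div_comm, mul_one, mul_one,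
      mul_one_div θ θ, div_self hθ0.ne', Real.rpow_one]
end
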